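/- For 0 < δ ≤ 1/8, the function h_δ(x) := (1/(δx) − 1)·ln(1 − x/4) is strictly decreasing in x on (0, 1]. -/

import Mathlib

private lemma log_lb {x : ℝ} (hx0 : 0 < x) (hx1 : x ≤ 1) :
    -(x * (1 - x / 8) / (4 - x)) < Real.log (1 - x / 4) := by
  have h4 : (0:ℝ) < 4 - x := by linarith
  have h14 : (0:ℝ) < 1 - x / 4 := by linarith
  set c : ℝ := x * (1 - x / 8) / (4 - x) with hc_def
  have hc_eq : c * (4 - x) = x * (1 - x / 8) := by
    rw [hc_def, div_mul_cancel₀ _ h4.ne']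
  have hc0 : 0 < c := by
    apply div_pos (by nlinarith) h4
  rw [Real.lt_log_iff_exp_lt h14]
  have he : 1 + c + c ^ 2 / 2 ≤ Real.exp c := Real.quadratic_le_exp_of_nonneg hc0.le
  have hkey : 1 < (1 + c + c ^ 2 / 2) * (1 - x / 4) := by
    have expand : ((1 + c + c ^ 2 / 2) * (1 - x / 4) - 1) * ((4 - x) ^ 2 * 512)
        = x ^ 4 * (4 - x) := by
      rw [hc_def]; field_simp; ring
    have hp1 : 0 < ((1 + c + c ^ 2 / 2) * (1 - x / 4) - 1) * ((4 - x) ^ 2 * 512) := by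
      rw [expand]; positivity
    nlinarith [hp1, show (0:ℝ) < (4 - x) ^ 2 * 512 by positivity]
  have hexp : 1 < Real.exp c * (1 - x / 4) :=
    lt_of_lt_of_le hkey (by nlinarith [Real.exp_pos c])
  have hE := Real.exp_pos c
  rw [Real.exp_neg, inv_eq_one_div, div_lt_iff₀ hE]
  nlinarith [hexp]

theorem stmt_9 (δ : ℝ) (hδ0 : 0 < δ) (hδ1 : δ ≤ 1 / 8) :
    StrictAntiOn (fun x : ℝ => (1 / (δ * x) - 1) * Real.log (1 - x / 4))
      (Set.Ioc 0 1) := by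
  have hconv : Convex ℝ (Set.Ioc (0:ℝ) 1) := convex_Ioc 0 1
  apply strictAntiOn_of_deriv_neg hconv
  · -- continuity
    apply ContinuousOn.mul
    · exact (continuousOn_const.div (continuousOn_const.mul continuousOn_id)
        (fun x hx => by
          have : 0 < x := hx.1
          exact mul_ne_zero hδ0.ne' this.ne')).sub continuousOn_const
    · apply ContinuousOn.log
      · fun_prop
      · intro x hx
        have h1 : x ≤ 1 := hx.2
        have : (0:ℝ) < 1 - x / 4 := by linarith
        linarith
  · intro x hx
    rw [interior_Ioc] at hx
    obtain ⟨hx0, hx1⟩ := hx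
    have hx1' : x ≤ 1 := hx1.le
    have hδx : δ * x ≠ 0 := by positivity
    have h14 : (0:ℝ) < 1 - x / 4 := by linarith
    have h4 : (0:ℝ) < 4 - x := by linarith
    have d1 : HasDerivAt (fun y : ℝ => 1 / (δ * y) - 1) (-δ / (δ * x) ^ 2) x := by
      have h : HasDerivAt (fun y : ℝ => δ * y) δ x := by
        simpa using (hasDerivAt_id x).const_mul δ
      simpa [one_div] using (h.inv hδx).sub_const 1
    have d2 : HasDerivAt (fun y : ℝ => Real.log (1 - y / 4)) (-(1/4) / (1 - x / 4)) x := by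
      have h : HasDerivAt (fun y : ℝ => 1 - y / 4) (-(1/4)) x := by
        simpa using ((hasDerivAt_id x).div_const 4).const_sub 1
      exact h.log (ne_of_gt h14)
    have D : HasDerivAt (fun y : ℝ => (1 / (δ * y) - 1) * Real.log (1 - y / 4))
        (-δ / (δ * x) ^ 2 * Real.log (1 - x / 4) +
          (1 / (δ * x) - 1) * (-(1/4) / (1 - x / 4))) x := d1.mul d2
    rw [D.deriv]
    -- log bound, strengthened by δ ≤ 1/8
    have hlb := log_lb hx0 hx1'
    have hδc : x * (1 - x / 8) / (4 - x) ≤ x * (1 - δ * x) / (4 - x) := by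
      rw [div_le_div_iff₀ h4 h4]
      nlinarith [mul_nonneg (mul_nonneg (by linarith : (0:ℝ) ≤ 1/8 - δ) hx0.le)
        (mul_pos hx0 h4).le]
    have hL : -(x * (1 - δ * x) / (4 - x)) < Real.log (1 - x / 4) := by
      linarith
    have hcoef : -δ / (δ * x) ^ 2 < 0 := by
      apply div_neg_of_neg_of_pos (by linarith) (by positivity)
    have key : -δ / (δ * x) ^ 2 * Real.log (1 - x / 4) <
        -δ / (δ * x) ^ 2 * (-(x * (1 - δ * x) / (4 - x))) :=
      mul_lt_mul_of_neg_left hL hcoef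
    have heq : -δ / (δ * x) ^ 2 * (-(x * (1 - δ * x) / (4 - x))) +
        (1 / (δ * x) - 1) * (-(1/4) / (1 - x / 4)) = 0 := by
      field_simp
      ring
    linarith
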